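/- The operators G^(2)_{kl} form a system of matrix units: for all i, j, k, l ∈ {S,A}, G^(2)_{ij} G^(2)_{kl} = δ_{jk} G^(2)_{il}. -/

import Mathlib

open Matrix Kronecker

namespace WBA

/-- Configurations of `p` qudits of local dimension `d`. -/
abbrev Conf (d p : ℕ) := Fin p → Fin d

/-- Operators on `H = (ℂ^d)^{⊗ 2p}`, indexed by pairs (unprimed configuration, primed
configuration). -/
abbrev Op (d p : ℕ) := Matrix (Conf d p × Conf d p) (Conf d p × Conf d p) ℂ

/-- The projector `P⁺_{a,c'}` onto the maximally entangled state between unprimed system `a`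
and primed system `c`, tensored with the identity elsewhere. -/
noncomputable def Pplus (d p : ℕ) (a c : Fin p) : Op d p :=
  Matrix.of fun xy uv =>
    if xy.1 a = xy.2 c ∧ uv.1 a = uv.2 c ∧ (∀ j, j ≠ a → xy.1 j = uv.1 j) ∧
        (∀ j, j ≠ c → xy.2 j = uv.2 j) then
      (d : ℂ)⁻¹
    else 0

/-- `d • P⁺_{a,c'}`, i.e. the partially transposed swap `V^{t_{c'}}_{(a,c')}`. -/
noncomputable def arc (d p : ℕ) (a c : Fin p) : Op d p := (d : ℂ) • Pplus d p a c

/-- `V^(k) = ∏_{j=p-k+1}^{p} (d • P⁺_{j,j'})` (product over the last `k` systems;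
`V^(0) = 1`). -/
noncomputable def Vop (d p k : ℕ) : Op d p :=
  (((List.range p).filter (fun j => decide (p - k ≤ j))).map
    (fun j => if h : j < p then arc d p ⟨j, h⟩ ⟨j, h⟩ else 1)).prod

/-- `Q^(p) = d^{-p} V^(p)` and `Q^(k) = d^{-k} V^(k) - d^{-(k+1)} V^(k+1)` for `k < p`. -/
noncomputable def Qop (d p k : ℕ) : Op d p :=
  if k = p then ((d : ℂ) ^ p)⁻¹ • Vop d p p
  else ((d : ℂ) ^ k)⁻¹ • Vop d p k - ((d : ℂ) ^ (k + 1))⁻¹ • Vop d p (k + 1)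

/-- Permutation matrix on `(ℂ^d)^{⊗ n}`: sends `e_v` to `e_{v ∘ σ⁻¹}`. -/
noncomputable def permMat (d n : ℕ) (σ : Equiv.Perm (Fin n)) :
    Matrix (Fin n → Fin d) (Fin n → Fin d) ℂ :=
  Matrix.of fun x u => if x = u ∘ ⇑σ⁻¹ then 1 else 0

/-- `V_σ`: permutation of the unprimed factors, identity on the primed factors. -/
noncomputable def VL (d p : ℕ) (σ : Equiv.Perm (Fin p)) : Op d p :=
  (permMat d p σ) ⊗ₖ (1 : Matrix (Conf d p) (Conf d p) ℂ)

/-- `V'_τ`: permutation of the primed factors, identity on the unprimed factors. -/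
noncomputable def VR (d p : ℕ) (τ : Equiv.Perm (Fin p)) : Op d p :=
  (1 : Matrix (Conf d p) (Conf d p) ℂ) ⊗ₖ (permMat d p τ)

/-- Identification of `H` with `(ℂ^d)^{⊗ (p+p)}`. -/
def glue (d p : ℕ) : (Conf d p × Conf d p) ≃ (Fin (p + p) → Fin d) :=
  (Equiv.sumArrowEquivProdArrow (Fin p) (Fin p) (Fin d)).symm.trans
    (Equiv.arrowCongr finSumFinEquiv (Equiv.refl (Fin d)))

/-- The permutation operator `W_π`, `π ∈ S_{2p}`, permuting all `2p` tensor factors of `H`. -/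
noncomputable def Wfull (d p : ℕ) (π : Equiv.Perm (Fin (p + p))) : Op d p :=
  (permMat d (p + p) π).submatrix (glue d p) (glue d p)

/-- Partial transpose over the `p` primed factors:
`⟨x,y|M^Γ|u,v⟩ = ⟨x,v|M|u,y⟩`. -/
noncomputable def ptrans (d p : ℕ) (M : Op d p) : Op d p :=
  Matrix.of fun xy uv => M (xy.1, uv.2) (uv.1, xy.2)

/-- The algebra `A^d_{p,p}` of partially transposed permutation operators, as a
linear subspace of `End(H)`. -/
noncomputable def Apt (d p : ℕ) : Submodule ℂ (Op d p) :=
  Submodule.span ℂ {M | ∃ π : Equiv.Perm (Fin (p + p)), M = ptrans d p (Wfull d p π)}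

/-- Extension of an operator on systems `1,…,p-r,1',…,(p-r)'` by the identity on the
remaining systems. -/
noncomputable def embed (d p r : ℕ) (M : Op d (p - r)) : Op d p :=
  Matrix.of fun xy uv =>
    M (xy.1 ∘ Fin.castLE (Nat.sub_le p r), xy.2 ∘ Fin.castLE (Nat.sub_le p r))
      (uv.1 ∘ Fin.castLE (Nat.sub_le p r), uv.2 ∘ Fin.castLE (Nat.sub_le p r)) *
    (if ∀ j : Fin p, p - r ≤ (j : ℕ) → xy.1 j = uv.1 j ∧ xy.2 j = uv.2 j then 1 else 0)

/-- The ideal `M̃^(k) = span{ V_σ V'_τ Q^(k) V_π V'_ρ }` of `A^d_{p,p}`. -/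
noncomputable def Mtil (d p k : ℕ) : Submodule ℂ (Op d p) :=
  Submodule.span ℂ {M | ∃ σ τ π ρ : Equiv.Perm (Fin p),
    M = VL d p σ * VR d p τ * Qop d p k * (VL d p π * VR d p ρ)}

/-- Labels for the two irreps of `S_2`: symmetric `S` and antisymmetric `A`. -/
inductive SA
  | S
  | A
deriving DecidableEq

instance : Fintype SA :=
  ⟨{SA.S, SA.A}, fun x => by cases x <;> simp⟩

/-- The swap operator on `ℂ^d ⊗ ℂ^d`. -/
noncomputable def Fsw (d : ℕ) : Matrix (Conf d 2) (Conf d 2) ℂ :=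
  Matrix.of fun x u => if x 0 = u 1 ∧ x 1 = u 0 then 1 else 0

/-- Symmetric and antisymmetric projectors on `ℂ^d ⊗ ℂ^d`. -/
noncomputable def Esm (d : ℕ) : SA → Matrix (Conf d 2) (Conf d 2) ℂ
  | SA.S => (2 : ℂ)⁻¹ • (1 + Fsw d)
  | SA.A => (2 : ℂ)⁻¹ • (1 - Fsw d)

/-- `E_i ⊗ E_j` on `H = (ℂ^d)^{⊗4}`. -/
noncomputable def EE (d : ℕ) (i j : SA) : Op d 2 := (Esm d i) ⊗ₖ (Esm d j)

/-- `E_i ⊗ 1` on `H = (ℂ^d)^{⊗4}`. -/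
noncomputable def EId (d : ℕ) (i : SA) : Op d 2 :=
  (Esm d i) ⊗ₖ (1 : Matrix (Conf d 2) (Conf d 2) ℂ)

/-- Multiplicities `m_S = d(d+1)/2`, `m_A = d(d-1)/2` (real valued). -/
noncomputable def mR (d : ℕ) : SA → ℝ
  | SA.S => (d : ℝ) * ((d : ℝ) + 1) / 2
  | SA.A => (d : ℝ) * ((d : ℝ) - 1) / 2

/-- Multiplicities `m_S = d(d+1)/2`, `m_A = d(d-1)/2` (complex valued). -/
noncomputable def mC (d : ℕ) : SA → ℂ
  | SA.S => (d : ℂ) * ((d : ℂ) + 1) / 2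
  | SA.A => (d : ℂ) * ((d : ℂ) - 1) / 2

/-- `V^(1) = d • P⁺_{2,2'}` for `p = 2`. -/
noncomputable def V1 (d : ℕ) : Op d 2 := arc d 2 1 1

/-- `V^(2) = d² • P⁺_{2,2'} P⁺_{1,1'}` for `p = 2`. -/
noncomputable def V2 (d : ℕ) : Op d 2 := arc d 2 1 1 * arc d 2 0 0

/-- `Q^(2) = d^{-2} V^(2)` for `p = 2`. -/
noncomputable def Q2 (d : ℕ) : Op d 2 := ((d : ℂ) ^ 2)⁻¹ • V2 d

/-- `Q^(1) = d^{-1} V^(1) - d^{-2} V^(2)` for `p = 2`. -/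
noncomputable def Q1 (d : ℕ) : Op d 2 :=
  (d : ℂ)⁻¹ • V1 d - ((d : ℂ) ^ 2)⁻¹ • V2 d

/-- `G^(2)_{kl} = (d²/√(m_k m_l)) (E_k ⊗ 1) Q^(2) (E_l ⊗ 1)`. -/
noncomputable def G2 (d : ℕ) (k l : SA) : Op d 2 :=
  ((d : ℂ) ^ 2 / ((Real.sqrt (mR d k * mR d l) : ℝ) : ℂ)) • (EId d k * Q2 d * EId d l)

/-- `G^(2) = G^(2)_{SS} + G^(2)_{AA}`. -/
noncomputable def G2sum (d : ℕ) : Op d 2 := G2 d SA.S SA.S + G2 d SA.A SA.A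

/-- The Gram coefficients `b_{SS} = (d+2)/(4d)`, `b_{SA} = b_{AS} = 1/4`,
`b_{AA} = (d-2)/(4d)`. -/
noncomputable def bc (d : ℕ) : SA → SA → ℂ
  | SA.S, SA.S => ((d : ℂ) + 2) / (4 * (d : ℂ))
  | SA.S, SA.A => 1 / 4
  | SA.A, SA.S => 1 / 4
  | SA.A, SA.A => ((d : ℂ) - 2) / (4 * (d : ℂ))

/-- `Ĝ^(1)_{[ij][kl]} = (E_i ⊗ E_j) Q^(1) (E_k ⊗ E_l)`. -/
noncomputable def Ghat1 (d : ℕ) (i j k l : SA) : Op d 2 :=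
  EE d i j * Q1 d * EE d k l

/-- `G^(1)_{[ij][kl]} = b_{ij}⁻¹ Ĝ^(1)_{[ij][kl]}`. -/
noncomputable def G1 (d : ℕ) (i j k l : SA) : Op d 2 := (bc d i j)⁻¹ • Ghat1 d i j k l

/-- `G^(1) = Σ_{ij} G^(1)_{[ij][ij]}`. -/
noncomputable def G1sum (d : ℕ) : Op d 2 := ∑ i : SA, ∑ j : SA, G1 d i j i j

/-- `G^(0)_{ij} = E_i⊗E_j - b_{ij}⁻¹ (E_i⊗E_j)Q^(1)(E_i⊗E_j)
- δ_{ij} (d²/m_i) (E_i⊗1)Q^(2)(E_i⊗1)`. -/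
noncomputable def G0 (d : ℕ) (i j : SA) : Op d 2 :=
  EE d i j - (bc d i j)⁻¹ • (EE d i j * Q1 d * EE d i j) -
    (if i = j then (d : ℂ) ^ 2 / mC d i else 0) • (EId d i * Q2 d * EId d i)

def vv (d : ℕ) : Conf d 2 × Conf d 2 → ℂ := fun xy => if xy.1 = xy.2 then 1 else 0

theorem V2_eq (d : ℕ) (hd : 0 < d) : V2 d = vecMulVec (vv d) (vv d) := by
  have hd' : (d : ℂ) ≠ 0 := Nat.cast_ne_zero.mpr hd.ne'
  have hfx : ∀ a b : Conf d 2, a = b ↔ (a 0 = b 0 ∧ a 1 = b 1) := by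
    intro a b
    constructor
    · rintro rfl; exact ⟨rfl, rfl⟩
    · rintro ⟨h0, h1⟩; funext j; fin_cases j <;> assumption
  have hV : V2 d = ((d:ℂ) * (d:ℂ)) • (Pplus d 2 1 1 * Pplus d 2 0 0) := by
    simp [V2, arc, Matrix.smul_mul, Matrix.mul_smul, smul_smul]
  rw [hV]
  ext ⟨x, y⟩ ⟨u, v⟩
  simp only [Matrix.smul_apply, mul_apply, Pplus, Matrix.of_apply, vecMulVec_apply, vv,
    smul_eq_mul]
  rw [Fintype.sum_prod_type]
  have key : ∀ (w z : Conf d 2),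
      ((if x 1 = y 1 ∧ w 1 = z 1 ∧ (∀ j, j ≠ 1 → x j = w j) ∧ (∀ j, j ≠ 1 → y j = z j) then (d:ℂ)⁻¹ else 0) *
        if w 0 = z 0 ∧ u 0 = v 0 ∧ (∀ j, j ≠ 0 → w j = u j) ∧ (∀ j, j ≠ 0 → z j = v j) then (d:ℂ)⁻¹ else 0)
      = if z = ![y 0, v 1] then (if w = ![x 0, u 1] then
          (if (x 1 = y 1 ∧ x 0 = y 0) ∧ (u 1 = v 1 ∧ u 0 = v 0) then (d:ℂ)⁻¹ * (d:ℂ)⁻¹ else 0) else 0) else 0 := by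
    intro w z
    by_cases h3 : w = ![x 0, u 1] ∧ z = ![y 0, v 1] ∧ ((x 1 = y 1 ∧ x 0 = y 0) ∧ (u 1 = v 1 ∧ u 0 = v 0))
    · obtain ⟨hw, hz, ⟨hxy1, hxy0⟩, ⟨huv1, huv0⟩⟩ := h3
      subst hw hz
      have C1 : x 1 = y 1 ∧ (![x 0, u 1] : Conf d 2) 1 = (![y 0, v 1] : Conf d 2) 1 ∧
          (∀ j, j ≠ 1 → x j = (![x 0, u 1] : Conf d 2) j) ∧
          (∀ j, j ≠ 1 → y j = (![y 0, v 1] : Conf d 2) j) :=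
        ⟨hxy1, by simp [huv1], by simp [Fin.forall_fin_two],
          by simp [Fin.forall_fin_two]⟩
      have C2 : (![x 0, u 1] : Conf d 2) 0 = (![y 0, v 1] : Conf d 2) 0 ∧ u 0 = v 0 ∧
          (∀ j, j ≠ 0 → (![x 0, u 1] : Conf d 2) j = u j) ∧
          (∀ j, j ≠ 0 → (![y 0, v 1] : Conf d 2) j = v j) :=
        ⟨by simp [hxy0], huv0, by simp [Fin.forall_fin_two],
          by simp [Fin.forall_fin_two]⟩
      rw [if_pos C1, if_pos C2, if_pos rfl, if_pos rfl,
        if_pos ⟨⟨hxy1, hxy0⟩, ⟨huv1, huv0⟩⟩]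
    · have hR : (if z = ![y 0, v 1] then (if w = ![x 0, u 1] then
          (if (x 1 = y 1 ∧ x 0 = y 0) ∧ (u 1 = v 1 ∧ u 0 = v 0) then (d:ℂ)⁻¹ * (d:ℂ)⁻¹ else 0) else 0) else 0) = 0 := by
        split_ifs with a1 a2 a3 <;> try rfl
        exact absurd ⟨a2, a1, a3⟩ h3
      rw [hR, mul_eq_zero]
      by_contra hc
      push_neg at hc
      obtain ⟨hc1, hc2⟩ := hc
      have h1 : x 1 = y 1 ∧ w 1 = z 1 ∧ (∀ j, j ≠ 1 → x j = w j) ∧ (∀ j, j ≠ 1 → y j = z j) := by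
        by_contra h; rw [if_neg h] at hc1; exact hc1 rfl
      have h2 : w 0 = z 0 ∧ u 0 = v 0 ∧ (∀ j, j ≠ 0 → w j = u j) ∧ (∀ j, j ≠ 0 → z j = v j) := by
        by_contra h; rw [if_neg h] at hc2; exact hc2 rfl
      obtain ⟨hx1, hwz1, hxw, hyz⟩ := h1
      obtain ⟨hwz0, huv0, hwu, hzv⟩ := h2
      have e1 : x 0 = w 0 := hxw 0 (by decide)
      have e2 : y 0 = z 0 := hyz 0 (by decide)
      have e3 : w 1 = u 1 := hwu 1 (by decide)
      have e4 : z 1 = v 1 := hzv 1 (by decide)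
      exact h3 ⟨by funext j; fin_cases j <;> simp [← e1, e3],
        by funext j; fin_cases j <;> simp [← e2, e4],
        ⟨hx1, by rw [e1, e2, hwz0]⟩, ⟨by rw [← e3, ← e4, hwz1], huv0⟩⟩
  rw [Finset.sum_congr rfl (fun w _ => Finset.sum_congr rfl (fun z _ => key w z))]
  simp only [Finset.sum_ite_eq', Finset.mem_univ, if_true]
  by_cases h1 : x = y <;> by_cases h2 : u = v
  · obtain ⟨a0, a1⟩ := (hfx x y).mp h1
    obtain ⟨b0, b1⟩ := (hfx u v).mp h2
    rw [if_pos ⟨⟨a1, a0⟩, ⟨b1, b0⟩⟩, if_pos h1, if_pos h2]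
    field_simp
    try ring
  · rw [if_neg (fun hc => h2 ((hfx u v).mpr ⟨hc.2.2, hc.2.1⟩)), if_pos h1, if_neg h2]
    ring
  · rw [if_neg (fun hc => h1 ((hfx x y).mpr ⟨hc.1.2, hc.1.1⟩)), if_neg h1, if_pos h2]
    ring
  · rw [if_neg (fun hc => h1 ((hfx x y).mpr ⟨hc.1.2, hc.1.1⟩)), if_neg h1, if_neg h2]
    ring

lemma aux_mul_vecMulVec {n : Type*} [Fintype n] (M : Matrix n n ℂ) (a b : n → ℂ) :
    M * vecMulVec a b = vecMulVec (M *ᵥ a) b := by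
  ext i j
  simp only [mul_apply, vecMulVec_apply, mulVec, dotProduct, Finset.sum_mul]
  exact Finset.sum_congr rfl fun k _ => by ring

lemma aux_vecMulVec_mul {n : Type*} [Fintype n] (a b : n → ℂ) (M : Matrix n n ℂ) :
    vecMulVec a b * M = vecMulVec a (b ᵥ* M) := by
  ext i j
  simp only [mul_apply, vecMulVec_apply, vecMul, dotProduct, Finset.mul_sum]
  exact Finset.sum_congr rfl fun k _ => by ring

lemma aux_vecMulVec_mul_vecMulVec {n : Type*} [Fintype n] (a b c e : n → ℂ) :
    vecMulVec a b * vecMulVec c e = (b ⬝ᵥ c) • vecMulVec a e := by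
  ext i j
  simp only [mul_apply, vecMulVec_apply, dotProduct, Matrix.smul_apply, smul_eq_mul, Finset.sum_mul]
  exact Finset.sum_congr rfl fun k _ => by ring

lemma Fsw_sq (d : ℕ) : Fsw d * Fsw d = 1 := by
  have hfx : ∀ a b : Conf d 2, a = b ↔ (a 0 = b 0 ∧ a 1 = b 1) := by
    intro a b
    constructor
    · rintro rfl; exact ⟨rfl, rfl⟩
    · rintro ⟨h0, h1⟩; funext j; fin_cases j <;> assumption
  ext x u
  simp only [Fsw, mul_apply, Matrix.of_apply, Matrix.one_apply]
  have key : ∀ w : Conf d 2,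
      ((if x 0 = w 1 ∧ x 1 = w 0 then (1:ℂ) else 0) * if w 0 = u 1 ∧ w 1 = u 0 then (1:ℂ) else 0)
      = if w = ![x 1, x 0] then (if x = u then (1:ℂ) else 0) else 0 := by
    intro w
    by_cases h : w = ![x 1, x 0]
    · subst h
      rw [if_pos rfl, if_pos (by simp)]
      by_cases h2 : x = u
      · subst h2; rw [if_pos (by simp), if_pos rfl, one_mul]
      · rw [if_neg h2, if_neg, mul_zero]
        intro hc
        exact h2 ((hfx x u).mpr ⟨by simpa using hc.2, by simpa using hc.1⟩)
    · rw [if_neg h, if_neg, zero_mul]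
      rintro ⟨hc1, hc2⟩
      exact h (by funext j; fin_cases j <;> simp [hc1.symm, hc2.symm])
  rw [Finset.sum_congr rfl (fun w _ => key w)]
  simp only [Finset.sum_ite_eq', Finset.mem_univ, if_true]

lemma Esm_mul (d : ℕ) (j k : SA) : Esm d j * Esm d k = if j = k then Esm d j else 0 := by
  have h := Fsw_sq d
  cases j <;> cases k <;>
    simp only [Esm, if_true, if_false, reduceCtorEq, reduceIte] <;>
    rw [Matrix.smul_mul, Matrix.mul_smul, smul_smul] <;>
    simp only [mul_add, add_mul, mul_sub, sub_mul, mul_one, one_mul, h] <;>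
    module

lemma aux_quad (d : ℕ) (M : Matrix (Conf d 2) (Conf d 2) ℂ) :
    (vv d ᵥ* (M ⊗ₖ (1 : Matrix (Conf d 2) (Conf d 2) ℂ))) ⬝ᵥ vv d = M.trace := by
  simp only [dotProduct, vecMul, dotProduct, vv, kroneckerMap_apply, Matrix.one_apply,
    Matrix.trace, Matrix.diag, Fintype.sum_prod_type, ite_mul, mul_ite, one_mul, mul_one,
    zero_mul, mul_zero]
  simp [Finset.sum_ite_eq, Finset.sum_ite_eq']

lemma trace_Fsw (d : ℕ) : (Fsw d).trace = (d : ℂ) := by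
  rw [Matrix.trace]
  simp only [Matrix.diag, Fsw, Matrix.of_apply]
  have h1 : ∀ x : Conf d 2, (if x 0 = x 1 ∧ x 1 = x 0 then (1:ℂ) else 0)
      = if x 0 = x 1 then (1:ℂ) else 0 := fun x => by
    by_cases h : x 0 = x 1
    · rw [if_pos ⟨h, h.symm⟩, if_pos h]
    · rw [if_neg (fun hc => h hc.1), if_neg h]
  rw [Finset.sum_congr rfl fun x _ => h1 x]
  rw [Fintype.sum_equiv (piFinTwoEquiv (fun _ => Fin d))
    _ (fun p => if p.1 = p.2 then (1:ℂ) else 0) (fun x => by simp [piFinTwoEquiv]; exact if_congr Iff.rfl rfl rfl)]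
  rw [Fintype.sum_prod_type]
  simp [Finset.sum_ite_eq]

lemma trace_one_conf (d : ℕ) :
    (1 : Matrix (Conf d 2) (Conf d 2) ℂ).trace = ((d : ℂ))^2 := by
  rw [Matrix.trace_one]
  simp [Fintype.card_fun]

lemma mC_eq_mR (d : ℕ) (j : SA) : mC d j = ((mR d j : ℝ) : ℂ) := by
  cases j <;> simp [mC, mR] <;> push_cast <;> ring

lemma trace_Esm (d : ℕ) (j : SA) : (Esm d j).trace = mC d j := by
  cases j <;>
    simp [Esm, Matrix.trace_smul, Matrix.trace_add, Matrix.trace_sub, trace_Fsw,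
      trace_one_conf, mC, smul_eq_mul] <;> ring

lemma EId_mul (d : ℕ) (j k : SA) :
    EId d j * EId d k = if j = k then EId d j else 0 := by
  rw [EId, EId, ← Matrix.mul_kronecker_mul, Esm_mul, Matrix.one_mul]
  split_ifs with h
  · rfl
  · rw [Matrix.zero_kronecker]

lemma aux_mid (d : ℕ) (j k : SA) :
    (vv d ᵥ* EId d j) ⬝ᵥ (EId d k *ᵥ vv d) = if j = k then mC d j else 0 := by
  rw [dotProduct_mulVec, vecMul_vecMul, EId_mul]
  split_ifs with h
  · rw [EId, aux_quad, trace_Esm]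
  · simp

lemma mR_pos (d : ℕ) (hd : 2 ≤ d) (j : SA) : 0 < mR d j := by
  have h2 : (2 : ℝ) ≤ (d : ℝ) := by exact_mod_cast hd
  cases j <;> simp only [mR] <;> nlinarith

lemma G2_eq (d : ℕ) (hd : 2 ≤ d) (i j : SA) :
    G2 d i j = ((d : ℂ)^2 / (((Real.sqrt (mR d i) : ℝ) : ℂ) * ((Real.sqrt (mR d j) : ℝ) : ℂ))
        * ((d : ℂ)^2)⁻¹) •
      vecMulVec (EId d i *ᵥ vv d) (vv d ᵥ* EId d j) := by
  have hpos : 0 < d := by omega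
  have hsq : ((Real.sqrt (mR d i * mR d j) : ℝ) : ℂ)
      = ((Real.sqrt (mR d i) : ℝ) : ℂ) * ((Real.sqrt (mR d j) : ℝ) : ℂ) := by
    rw [Real.sqrt_mul (mR_pos d hd i).le]
    push_cast
    ring
  rw [G2, Q2, V2_eq d hpos, Matrix.mul_smul, Matrix.smul_mul, aux_mul_vecMulVec,
    aux_vecMulVec_mul, smul_smul, hsq]

theorem G2_matrix_units' (d : ℕ) (hd : 2 ≤ d) (i j k l : SA) :
    G2 d i j * G2 d k l = if j = k then G2 d i l else 0 := by
  have hd0 : (d : ℂ) ≠ 0 := Nat.cast_ne_zero.mpr (by omega)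
  have hs : ∀ m : SA, ((Real.sqrt (mR d m) : ℝ) : ℂ) ≠ 0 := fun m => by
    simp only [ne_eq, Complex.ofReal_eq_zero]
    exact (Real.sqrt_pos.mpr (mR_pos d hd m)).ne'
  have hssq : ∀ m : SA, ((Real.sqrt (mR d m) : ℝ) : ℂ) ^ 2 = mC d m := fun m => by
    rw [mC_eq_mR]
    rw [← Complex.ofReal_pow, Real.sq_sqrt (mR_pos d hd m).le]
  rw [G2_eq d hd i j, G2_eq d hd k l, Matrix.smul_mul, Matrix.mul_smul, smul_smul,
    aux_vecMulVec_mul_vecMulVec, aux_mid, smul_smul]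
  by_cases hjk : j = k
  · subst hjk
    rw [if_pos rfl, if_pos rfl, G2_eq d hd i l]
    congr 1
    rw [← hssq j]
    field_simp [hs i, hs j, hs l]
  · rw [if_neg hjk, if_neg hjk, mul_zero, zero_smul]


/-- the operators `G^(2)_{kl}` form a system of matrix units:
`G^(2)_{ij} G^(2)_{kl} = δ_{jk} G^(2)_{il}`. -/
theorem G2_matrix_units (d : ℕ) (hd : 2 ≤ d) (i j k l : SA) :
    G2 d i j * G2 d k l = if j = k then G2 d i l else 0 :=
  G2_matrix_units' d hd i j k l

end WBA
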